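/- Let n ≥ 2 and let A be an n×n real sign pattern. Say that the digraph of A contains a k-cycle if there exist k distinct indices v_1,…,v_k in {1,…,n} with A_{v_i v_{i+1}} ≠ 0 for i = 1,…,k−1 and A_{v_k v_1} ≠ 0. Then: (i) if n ≡ 0 (mod 8) and the digraph of A contains an (n−1)-cycle, then some M ∈ Q_A has D2(M) > 0; (ii) if n ≡ 4 (mod 8) and the digraph of A contains an (n−1)-cycle, then some M ∈ Q_A has D2(M) < 0; (iii) if n ≡ 1 (mod 8) and the digraph of A contains an n-cycle, then some M ∈ Q_A has D2(M) > 0; (iv) if n ≡ 5 (mod 8) and the digraph of A contains an n-cycle, then some M ∈ Q_A has D2(M) < 0. -/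

import Mathlib

/-- The `k`-th minor-sum of an `n × n` real matrix `M`, extended to integer
indices by `0` outside `0 ≤ k ≤ n`. -/
noncomputable def minorSum (n : ℕ) (M : Matrix (Fin n) (Fin n) ℝ) (k : ℤ) : ℝ :=
  if 0 ≤ k ∧ k ≤ (n : ℤ) then (-1) ^ k.toNat * (Matrix.charpoly M).coeff (n - k.toNat)
  else 0

/-- The determinant of the second additive compound of `M`, computed as the
determinant of the `(n-1) × (n-1)` matrix whose `(i,j)` entry (1-indexed) is
`J_{2i-j}(M)`. -/
noncomputable def D2 (n : ℕ) (M : Matrix (Fin n) (Fin n) ℝ) : ℝ :=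
  Matrix.det (Matrix.of fun i j : Fin (n - 1) =>
    minorSum n M (2 * ((i : ℕ) : ℤ) + 2 - (((j : ℕ) : ℤ) + 1)))

/-- The qualitative class of a sign pattern `A`. -/
def qualClass (n : ℕ) (A : Matrix (Fin n) (Fin n) ℝ) : Set (Matrix (Fin n) (Fin n) ℝ) :=
  {M | ∀ i j, Real.sign (M i j) = Real.sign (A i j)}

/-- The digraph of `A` contains a `k`-cycle: there are `k` distinct vertices
`v 0, …, v (k-1)` with an arc from each `v i` to `v (i+1)` (indices mod `k`). -/
def hasCycle (n k : ℕ) (hk : 0 < k) (A : Matrix (Fin n) (Fin n) ℝ) : Prop :=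
  ∃ v : Fin k → Fin n, Function.Injective v ∧
    ∀ i : Fin k, A (v i) (v (i + ⟨1 % k, Nat.mod_lt 1 hk⟩)) ≠ 0


section CycleObstructionAux
open Polynomial Matrix Finset Equiv Equiv.Perm

lemma eval_cp (n : ℕ) (M : Matrix (Fin n) (Fin n) ℝ) (x : ℝ) :
    (Matrix.charpoly M).eval x = (x • (1 : Matrix (Fin n) (Fin n) ℝ) - M).det := by
  rw [Matrix.charpoly, ← Polynomial.coe_evalRingHom, RingHom.map_det]
  congr 1
  ext i j
  by_cases h : i = j
  · subst h; simp [charmatrix_apply_eq, Matrix.sub_apply, Matrix.smul_apply, Matrix.one_apply]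
  · simp [charmatrix_apply_ne _ _ _ h, Matrix.sub_apply, Matrix.smul_apply, Matrix.one_apply_ne h]

lemma cont_coeff (n j : ℕ) :
    Continuous fun M : Matrix (Fin n) (Fin n) ℝ => (Matrix.charpoly M).coeff j := by
  classical
  set s : Finset ℝ := (Finset.range (n+1)).image (Nat.cast) with hs
  have hinj : Set.InjOn (id : ℝ → ℝ) s := fun a _ b _ h => h
  have hcard : n + 1 ≤ s.card := by
    rw [hs, Finset.card_image_of_injective _ Nat.cast_injective, Finset.card_range]
  have key : ∀ M : Matrix (Fin n) (Fin n) ℝ,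
      (Matrix.charpoly M).coeff j
        = ∑ x ∈ s, (x • (1 : Matrix (Fin n) (Fin n) ℝ) - M).det
            * (Lagrange.basis s id x).coeff j := by
    intro M
    have hdeg : (Matrix.charpoly M).degree < s.card := by
      refine lt_of_le_of_lt (Polynomial.degree_le_natDegree) ?_
      rw [Matrix.charpoly_natDegree_eq_dim]
      simp only [Fintype.card_fin]; exact_mod_cast lt_of_lt_of_le (Nat.lt_succ_self n) hcard
    conv_lhs => rw [Lagrange.eq_interpolate hinj hdeg]
    rw [Lagrange.interpolate_apply, Polynomial.finset_sum_coeff]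
    refine Finset.sum_congr rfl fun x hx => ?_
    rw [Polynomial.coeff_C_mul, eval_cp, id]
  simp only [funext key]
  exact continuous_finset_sum _ fun x _ =>
    ((continuous_const.sub continuous_id).matrix_det).mul continuous_const

lemma cont_minorSum (n : ℕ) (z : ℤ) :
    Continuous fun M : Matrix (Fin n) (Fin n) ℝ => minorSum n M z := by
  unfold minorSum
  by_cases h : 0 ≤ z ∧ z ≤ (n : ℤ)
  · simp only [if_pos h]; exact continuous_const.mul (cont_coeff n _)
  · simp only [if_neg h]; exact continuous_const

lemma cont_D2 (n : ℕ) : Continuous (D2 n) := by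
  unfold D2
  exact (continuous_matrix fun i j => cont_minorSum n _).matrix_det

-- generalized permutation matrix determinant

lemma det_genPerm {N : ℕ} (B : Matrix (Fin N) (Fin N) ℝ) (τ : Equiv.Perm (Fin N))
    (h : ∀ i j, j ≠ τ i → B i j = 0) :
    B.det = (Equiv.Perm.sign τ : ℤ) * ∏ i, B i (τ i) := by
  classical
  rw [Matrix.det_apply]
  have hz : ∀ σ : Equiv.Perm (Fin N), σ ≠ τ⁻¹ →
      (Equiv.Perm.sign σ • ∏ i, B (σ i) i : ℝ) = 0 := by
    intro σ hσ
    have : ∃ i, B (σ i) i = 0 := by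
      by_contra hc
      push_neg at hc
      apply hσ
      have hτσ : ∀ i, i = τ (σ i) := by
        intro i
        by_contra hne
        exact hc i (h (σ i) i hne)
      ext i
      have : τ⁻¹ i = σ i := by
        conv_lhs => rw [hτσ i]
        simp
      rw [← this]
    obtain ⟨i, hi⟩ := this
    rw [show (∏ i, B (σ i) i) = 0 from Finset.prod_eq_zero (Finset.mem_univ i) hi, smul_zero]
  rw [Finset.sum_eq_single τ⁻¹]
  · have : ∏ i, B (τ⁻¹ i) i = ∏ i, B i (τ i) := by
      rw [← Equiv.prod_comp τ (fun i => B (τ⁻¹ i) i)]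
      simp
    rw [this, Equiv.Perm.sign_inv]
    simp [Units.smul_def, zsmul_eq_mul]
  · intro σ _ hσ; exact hz σ hσ
  · intro h'; exact absurd (Finset.mem_univ _) h'

lemma sign_eq_signAux' {N : ℕ} (hN : 2 ≤ N) (f : Equiv.Perm (Fin N)) :
    Equiv.Perm.sign f = Equiv.Perm.signAux f := by
  haveI : Nontrivial (Fin N) := ⟨⟨⟨0, by omega⟩, ⟨1, by omega⟩, by simp [Fin.ext_iff]⟩⟩
  have hsurj : Function.Surjective (MonoidHom.mk' Equiv.Perm.signAux Equiv.Perm.signAux_mul :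
      Equiv.Perm (Fin N) →* ℤˣ) := by
    intro a
    rcases Int.units_eq_one_or a with rfl | rfl
    · exact ⟨1, Equiv.Perm.signAux_one N⟩
    · exact ⟨Equiv.swap ⟨0, by omega⟩ ⟨1, by omega⟩,
        Equiv.Perm.signAux_swap (by simp [Fin.ext_iff])⟩
  have := Equiv.Perm.eq_sign_of_surjective_hom hsurj
  rw [← this]
  rfl

lemma signAux_eq_pow {N : ℕ} (f : Equiv.Perm (Fin N)) :
    Equiv.Perm.signAux f
      = (-1 : ℤˣ) ^ ((Equiv.Perm.finPairsLT N).filter fun x => f x.1 ≤ f x.2).card := by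
  unfold Equiv.Perm.signAux
  rw [← Finset.prod_filter_mul_prod_filter_not (Equiv.Perm.finPairsLT N)
    (fun x => f x.1 ≤ f x.2)]
  rw [Finset.prod_congr rfl (fun x hx => if_pos (Finset.mem_filter.1 hx).2),
      Finset.prod_congr rfl (fun x hx => if_neg (Finset.mem_filter.1 hx).2),
      Finset.prod_const, Finset.prod_const, one_pow, mul_one]

lemma card_filter_fin (N : ℕ) (P : ℕ → Prop) [DecidablePred P] :
    (Finset.univ.filter fun i : Fin N => P i.val).card = ((Finset.range N).filter P).card := by
  rw [Finset.card_filter, Finset.card_filter]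
  exact Fin.sum_univ_eq_sum_range (fun i => if P i then 1 else 0) N

lemma detB {N k l : ℕ} (hk : k = 2*l+1) (h3 : 3 ≤ k) (hkN : k ≤ N + 1) (hNk : N ≤ k) (c : ℝ)
    (B : Matrix (Fin N) (Fin N) ℝ)
    (hB : ∀ i j : Fin N, B i j =
      if (j:ℕ) = 2*(i:ℕ)+1 then 1 else if (j:ℕ) + k = 2*(i:ℕ)+1 then c else 0) :
    B.det = (-1 : ℝ) ^ (l*(l+1)/2) * c ^ (N - l) := by
  classical
  have hN2 : 2 ≤ N := by omega
  -- the permutation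
  have hb1 : ∀ i : Fin N, 2*i.val+1 < k → 2*i.val+1 < N := by
    intro i h; have := i.isLt; omega
  have hb2 : ∀ i : Fin N, ¬ (2*i.val+1 < k) → 2*i.val+1-k < N := by
    intro i h; have := i.isLt; omega
  set f : Fin N → Fin N := fun i =>
    if h : 2*i.val+1 < k then ⟨2*i.val+1, hb1 i h⟩ else ⟨2*i.val+1-k, hb2 i h⟩ with hf
  have hfval : ∀ i : Fin N, (f i).val = if 2*i.val+1 < k then 2*i.val+1 else 2*i.val+1-k := by
    intro i; rw [hf]; dsimp only; split_ifs <;> rfl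
  have hinj : Function.Injective f := by
    intro a b hab
    have h1 := hfval a; have h2 := hfval b
    rw [hab, h2] at h1
    have ha := a.isLt; have hb := b.isLt
    apply Fin.ext
    split_ifs at h1 <;> omega
  let τ : Equiv.Perm (Fin N) := Equiv.ofBijective f (Finite.injective_iff_bijective.mp hinj)
  have hτ : ∀ i, (τ i : Fin N) = f i := fun i => rfl
  -- B vanishes off the graph of τ
  have hvan : ∀ i j, j ≠ τ i → B i j = 0 := by
    intro i j hne
    rw [hB]
    have hji := j.isLt
    split_ifs with h1 h2
    · exfalso; apply hne; apply Fin.ext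
      rw [hτ, hfval]
      rw [if_pos (by omega)]
      omega
    · exfalso; apply hne; apply Fin.ext
      rw [hτ, hfval]
      rw [if_neg (by omega)]
      omega
    · rfl
  rw [det_genPerm B τ hvan]
  -- the product
  have hprod : ∏ i, B i (τ i) = c ^ (N - l) := by
    have hfac : ∀ i : Fin N, B i (τ i) = if 2*i.val+1 < k then 1 else c := by
      intro i
      rw [hB, hτ, hfval]
      split_ifs with h h1 h2 h3' <;> first | rfl | omega
    calc ∏ i, B i (τ i) = ∏ i : Fin N, (if 2*i.val+1 < k then 1 else c) :=
          Finset.prod_congr rfl fun i _ => hfac i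
      _ = c ^ (N - l) := by
          rw [← Finset.prod_filter_mul_prod_filter_not Finset.univ (fun i : Fin N => 2*i.val+1 < k)]
          rw [Finset.prod_congr rfl (fun x hx => if_pos (Finset.mem_filter.1 hx).2),
              Finset.prod_congr rfl (fun x hx => if_neg (Finset.mem_filter.1 hx).2),
              Finset.prod_const, Finset.prod_const, one_pow, one_mul]
          congr 1
          have : (Finset.univ.filter fun i : Fin N => ¬ (2*i.val+1 < k)).card
              = ((Finset.range N).filter fun a => ¬ (2*a+1 < k)).card := card_filter_fin N (fun a => ¬ (2*a+1 < k))
          rw [this]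
          have : ((Finset.range N).filter fun a => ¬ (2*a+1 < k)) = Finset.Ico l N := by
            ext a; simp only [Finset.mem_filter, Finset.mem_range, Finset.mem_Ico, not_lt]
            omega
          rw [this, Nat.card_Ico]
  rw [hprod]
  -- the sign
  have hsign : Equiv.Perm.sign τ = (-1 : ℤˣ) ^ (l*(l+1)/2) := by
    rw [sign_eq_signAux' hN2, signAux_eq_pow]
    congr 1
    set V := (Equiv.Perm.finPairsLT N).filter (fun x => τ x.1 ≤ τ x.2) with hV
    have hmem : ∀ x : Σ _ : Fin N, Fin N,
        x ∈ V ↔ ((x.2:ℕ) < l ∧ l ≤ (x.1:ℕ) ∧ (x.1:ℕ) ≤ (x.2:ℕ) + l) := by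
      intro x
      rw [hV, Finset.mem_filter, Equiv.Perm.mem_finPairsLT]
      have hv1 := hfval x.1; have hv2 := hfval x.2
      have h1l := x.1.isLt; have h2l := x.2.isLt
      constructor
      · rintro ⟨hlt, hle⟩
        rw [Fin.lt_def] at hlt
        rw [Fin.le_def, hτ, hτ, hv1, hv2] at hle
        split_ifs at hle <;> omega
      · rintro ⟨hb, ha1, ha2⟩
        constructor
        · rw [Fin.lt_def]; omega
        · rw [Fin.le_def, hτ, hτ, hv1, hv2]
          rw [if_neg (by omega), if_pos (by omega)]
          omega
    have hcard : V.card = ∑ b ∈ Finset.range l, (b+1) := by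
      have := Finset.card_bij
        (s := V) (t := (Finset.range l).sigma fun b => Finset.Icc l (b+l))
        (fun x _ => (⟨x.2.val, x.1.val⟩ : Σ _ : ℕ, ℕ))
        (by
          intro a ha
          rw [hmem] at ha
          simp only [Finset.mem_sigma, Finset.mem_range, Finset.mem_Icc]
          exact ⟨ha.1, ha.2.1, ha.2.2⟩)
        (by
          rintro ⟨a1, b1⟩ h1 ⟨a2, b2⟩ h2 heq
          simp only [Sigma.mk.inj_iff, heq_eq_eq] at heq
          have : b1 = b2 := Fin.ext heq.1
          have : a1 = a2 := Fin.ext heq.2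
          subst this; subst ‹b1 = b2›; rfl)
        (by
          rintro ⟨b, a⟩ hb
          simp only [Finset.mem_sigma, Finset.mem_range, Finset.mem_Icc] at hb
          refine ⟨⟨⟨a, by omega⟩, ⟨b, by omega⟩⟩, ?_, rfl⟩
          rw [hmem]
          exact ⟨hb.1, hb.2.1, hb.2.2⟩)
      rw [this, Finset.card_sigma]
      exact Finset.sum_congr rfl fun b _ => by rw [Nat.card_Icc]; omega
    have hgauss : (∑ i ∈ Finset.range l, i) * 2 = l * (l - 1) := Finset.sum_range_id_mul_two l
    have hsum : ∑ b ∈ Finset.range l, (b+1) = l*(l+1)/2 := by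
      have h1 : ∑ b ∈ Finset.range l, (b+1) = (∑ b ∈ Finset.range l, b) + l := by
        rw [Finset.sum_add_distrib, Finset.sum_const, Finset.card_range, smul_eq_mul, mul_one]
      have h2 : l * (l+1) = l * (l-1) + 2 * l := by
        cases l with
        | zero => rfl
        | succ m => simp only [Nat.succ_sub_one]; ring
      omega
    rw [hcard, hsum]
  rw [hsign]
  push_cast
  norm_num

open Fin.CommRing in
lemma charpoly_cycle {n k' : ℕ} (h3 : 3 ≤ k'+1) (hkn : k'+1 ≤ n) (hko : (k'+1) % 2 = 1)
    (v : Fin (k'+1) → Fin n) (hv : Function.Injective v)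
    (C : Matrix (Fin n) (Fin n) ℝ)
    (hC : ∀ i j, (¬ ∃ t : Fin (k'+1), v t = i ∧ v (t+1) = j) → C i j = 0) :
    Matrix.charpoly C = Polynomial.X ^ n
      - Polynomial.C (∏ t : Fin (k'+1), C (v t) (v (t+1))) * Polynomial.X ^ (n - (k'+1)) := by
  classical
  have h10 : (1 : Fin (k'+1)) ≠ 0 := by
    intro h
    have := congrArg Fin.val h
    rw [Fin.val_one', Fin.val_zero, Nat.mod_eq_of_lt (by omega)] at this
    exact one_ne_zero this
  have hvne : ∀ t : Fin (k'+1), v t ≠ v (t+1) := by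
    intro t h
    have h2 := hv h
    have : (1 : Fin (k'+1)) = 0 := by
      have h' : t + 1 = t + 0 := by rw [add_zero]; exact h2.symm
      exact add_left_cancel h'
    exact h10 this
  have hdiag : ∀ i, C i i = 0 := by
    intro i
    apply hC
    rintro ⟨t, h1, h2⟩
    exact hvne t (h1.trans h2.symm)
  set σc : Equiv.Perm (Fin n) :=
    (finRotate (k'+1)).extendDomain (Equiv.ofInjective v hv) with hσc
  have hσv : ∀ t, σc (v t) = v (t+1) := by
    intro t
    have := Equiv.Perm.extendDomain_apply_image (finRotate (k'+1)) (Equiv.ofInjective v hv) t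
    simpa [Equiv.ofInjective_apply, finRotate_succ_apply] using this
  have hσfix : ∀ x, x ∉ Set.range v → σc x = x := fun x hx =>
    Equiv.Perm.extendDomain_apply_not_subtype _ _ hx
  have hσinvfix : ∀ x, x ∉ Set.range v → σc⁻¹ x = x := by
    intro x hx
    rw [Equiv.Perm.inv_eq_iff_eq]
    exact (hσfix x hx).symm
  have hσinv : ∀ t, σc⁻¹ (v t) = v (t - 1) := by
    intro t
    rw [Equiv.Perm.inv_eq_iff_eq, hσv]
    congr 1
    ring
  have hsign : Equiv.Perm.sign σc = 1 := by
    rw [hσc, Equiv.Perm.sign_extendDomain, sign_finRotate]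
    exact Even.neg_one_pow (Nat.even_iff.mpr (by omega))
  have hσne1 : σc ≠ 1 := by
    intro h
    have h0 : σc (v 0) = v 0 := by rw [h]; rfl
    rw [hσv, zero_add] at h0
    exact h10 (hv h0)
  set P := Matrix.charmatrix C with hP
  set c := ∏ t : Fin (k'+1), C (v t) (v (t+1)) with hc
  have hzero : ∀ σ : Equiv.Perm (Fin n), σ ≠ 1 → σ ≠ σc⁻¹ →
      (∏ i, P (σ i) i) = 0 := by
    intro σ hσ1 hσ2
    by_contra hprod
    have hall : ∀ i, P (σ i) i ≠ 0 := by
      intro i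
      exact Finset.prod_ne_zero_iff.mp hprod i (Finset.mem_univ i)
    have harc : ∀ i, σ i ≠ i → ∃ t, σ i = v t ∧ i = v (t+1) := by
      intro i hne
      have hPi := hall i
      rw [hP, Matrix.charmatrix_apply_ne _ _ _ hne] at hPi
      have hCne : C (σ i) i ≠ 0 := by
        intro h; rw [h] at hPi; simp at hPi
      by_contra hex
      push_neg at hex
      exact hCne (hC _ _ (by
        rintro ⟨t, h1, h2⟩
        exact (hex t h1.symm h2.symm).elim))
    have hmoved_range : ∀ i, σ i ≠ i → i ∈ Set.range v := by
      intro i hne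
      obtain ⟨t, _, h2⟩ := harc i hne
      exact ⟨t+1, h2.symm⟩
    have hstep : ∀ t : Fin (k'+1), σ (v t) ≠ v t →
        σ (v t) = v (t - 1) ∧ σ (v (t-1)) ≠ v (t-1) := by
      intro t hne
      obtain ⟨t', h1, h2⟩ := harc (v t) hne
      have ht' : t = t' + 1 := hv h2
      have ht'' : t' = t - 1 := by rw [ht']; ring
      refine ⟨by rw [h1, ht''], ?_⟩
      intro hfix
      have he : σ (v t) = σ (v (t-1)) := by rw [hfix, h1, ht'']
      have hvv := hv (σ.injective he)
      apply h10
      have hz : t - (t - 1) = 0 := by rw [← hvv]; ring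
      calc (1 : Fin (k'+1)) = t - (t-1) := by ring
      _ = 0 := hz
    have hex : ∃ t0 : Fin (k'+1), σ (v t0) ≠ v t0 := by
      have hmv : ∃ x, σ x ≠ x := by
        by_contra hall'
        push_neg at hall'
        exact hσ1 (Equiv.ext hall')
      obtain ⟨x, hx⟩ := hmv
      obtain ⟨t, ht⟩ := hmoved_range x hx
      exact ⟨t, by rw [ht]; exact hx⟩
    obtain ⟨t0, ht0⟩ := hex
    have hiter : ∀ m : ℕ, σ (v (t0 - (m : Fin (k'+1)))) ≠ v (t0 - (m : Fin (k'+1))) := by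
      intro m
      induction m with
      | zero => simpa using ht0
      | succ m ih =>
        have hs2 := (hstep _ ih).2
        have hcast : t0 - ((m+1 : ℕ) : Fin (k'+1)) = (t0 - (m : Fin (k'+1))) - 1 := by
          push_cast
          ring
        rw [hcast]
        exact hs2
    have hallmoved : ∀ t : Fin (k'+1), σ (v t) ≠ v t := by
      intro t
      have hit := hiter ((t0 - t).val)
      rwa [Fin.cast_val_eq_self, sub_sub_cancel] at hit
    apply hσ2
    refine Equiv.ext fun x => ?_
    by_cases hx : x ∈ Set.range v
    · obtain ⟨t, rfl⟩ := hx
      rw [(hstep t (hallmoved t)).1, hσinv]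
    · rw [hσinvfix x hx]
      by_contra hne
      exact hx (hmoved_range x hne)
  rw [Matrix.charpoly, ← hP, Matrix.det_apply]
  have hsubset : ({1, σc⁻¹} : Finset (Equiv.Perm (Fin n))) ⊆ Finset.univ :=
    Finset.subset_univ _
  rw [← Finset.sum_subset hsubset (fun σ _ hσ => by
    simp only [Finset.mem_insert, Finset.mem_singleton] at hσ
    push_neg at hσ
    rw [hzero σ hσ.1 hσ.2, smul_zero])]
  have hne : (1 : Equiv.Perm (Fin n)) ≠ σc⁻¹ := by
    intro h
    exact hσne1 (by rw [← inv_inv σc, ← h]; rfl)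
  rw [Finset.sum_pair hne]
  have hid : (Equiv.Perm.sign (1 : Equiv.Perm (Fin n))) • (∏ i, P ((1 : Equiv.Perm (Fin n)) i) i)
      = Polynomial.X ^ n := by
    rw [Equiv.Perm.sign_one, one_smul]
    calc ∏ i, P ((1 : Equiv.Perm (Fin n)) i) i = ∏ _i : Fin n, (Polynomial.X : ℝ[X]) := by
          refine Finset.prod_congr rfl fun i _ => ?_
          rw [hP]
          show Matrix.charmatrix C i i = _
          rw [Matrix.charmatrix_apply_eq, hdiag, map_zero, sub_zero]
      _ = Polynomial.X ^ n := by rw [Finset.prod_const, Finset.card_univ, Fintype.card_fin]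
  have hcyc : (Equiv.Perm.sign σc⁻¹) • (∏ i, P (σc⁻¹ i) i)
      = - (Polynomial.C c * Polynomial.X ^ (n - (k'+1))) := by
    rw [Equiv.Perm.sign_inv, hsign, one_smul]
    have hre : ∏ i, P (σc⁻¹ i) i = ∏ i, P i (σc i) := by
      have hcomp := Equiv.prod_comp σc (fun i => P (σc⁻¹ i) i)
      rw [← hcomp]
      refine Finset.prod_congr rfl fun i _ => ?_
      rw [Equiv.Perm.inv_def, Equiv.symm_apply_apply]
    rw [hre]
    have hsplit := Finset.prod_mul_prod_compl (Finset.univ.image v) (fun x => P x (σc x))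
    rw [← hsplit]
    have hmems : ∀ x, x ∈ Finset.univ.image v ↔ x ∈ Set.range v := by
      intro x; simp
    have h1 : ∏ x ∈ Finset.univ.image v, P x (σc x) = - (Polynomial.C c) := by
      rw [Finset.prod_image (fun a _ b _ h => hv h)]
      have hterm : ∀ t : Fin (k'+1), P (v t) (σc (v t)) = - Polynomial.C (C (v t) (v (t+1))) := by
        intro t
        rw [hσv, hP]
        exact Matrix.charmatrix_apply_ne _ _ _ (hvne t)
      rw [Finset.prod_congr rfl fun t _ => hterm t]
      calc ∏ t : Fin (k'+1), -Polynomial.C (C (v t) (v (t+1)))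
          = ∏ t : Fin (k'+1), ((-1) * Polynomial.C (C (v t) (v (t+1)))) := by
            refine Finset.prod_congr rfl fun t _ => by ring
        _ = (∏ _t : Fin (k'+1), (-1 : ℝ[X]))
            * ∏ t : Fin (k'+1), Polynomial.C (C (v t) (v (t+1))) := Finset.prod_mul_distrib
        _ = - Polynomial.C c := by
            rw [Finset.prod_const, Finset.card_univ, Fintype.card_fin,
              Odd.neg_one_pow (Nat.odd_iff.mpr hko), ← map_prod, ← hc]
            ring
    have h2 : ∏ x ∈ (Finset.univ.image v)ᶜ, P x (σc x) = Polynomial.X ^ (n - (k'+1)) := by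
      have hterm : ∀ x ∈ (Finset.univ.image v)ᶜ, P x (σc x) = Polynomial.X := by
        intro x hx
        rw [Finset.mem_compl] at hx
        have hxr : x ∉ Set.range v := fun h => hx ((hmems x).mpr h)
        rw [hσfix x hxr, hP]
        show Matrix.charmatrix C x x = _
        rw [Matrix.charmatrix_apply_eq, hdiag, map_zero, sub_zero]
      rw [Finset.prod_congr rfl hterm, Finset.prod_const]
      congr 1
      rw [Finset.card_compl, Finset.card_image_of_injective _ hv]
      simp [Fintype.card_fin]
    rw [h1, h2]
    ring
  rw [hid, hcyc]
  ring

lemma minorSum_cycle {n k : ℕ} (h3 : 3 ≤ k) (hkn : k ≤ n) (hko : k % 2 = 1) (c : ℝ)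
    (C : Matrix (Fin n) (Fin n) ℝ)
    (hcp : Matrix.charpoly C
      = Polynomial.X ^ n - Polynomial.C c * Polynomial.X ^ (n - k)) (z : ℤ) :
    minorSum n C z = if z = 0 then 1 else if z = (k : ℤ) then c else 0 := by
  have hcoeff : ∀ j : ℕ, (Matrix.charpoly C).coeff j
      = (if n = j then (1:ℝ) else 0) - c * (if n - k = j then 1 else 0) := by
    intro j
    rw [hcp, Polynomial.coeff_sub, Polynomial.coeff_X_pow, Polynomial.coeff_C_mul,
      Polynomial.coeff_X_pow]
    congr 1 <;> [skip; congr 1] <;> simp [eq_comm]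
  unfold minorSum
  by_cases h : 0 ≤ z ∧ z ≤ (n : ℤ)
  · rw [if_pos h]
    set t := z.toNat with ht
    have htz : (t : ℤ) = z := Int.toNat_of_nonneg h.1
    have htn : t ≤ n := by omega
    rw [hcoeff]
    by_cases h0 : z = 0
    · have : t = 0 := by omega
      rw [if_pos h0, this]
      rw [if_pos (by omega), if_neg (by omega)]
      norm_num
    · rw [if_neg h0]
      by_cases hk : z = (k:ℤ)
      · have htk : t = k := by omega
        rw [if_pos hk, htk, if_neg (by omega), if_pos (by omega)]
        rw [Odd.neg_one_pow (Nat.odd_iff.mpr hko)]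
        ring
      · rw [if_neg hk, if_neg (by omega), if_neg (by omega)]
        ring
  · rw [if_neg h]
    rw [if_neg (by omega), if_neg (by omega)]

lemma master {n k l : ℕ} (hkl : k = 2*l+1) (h3 : 3 ≤ k) (hkn : k ≤ n) (hnk : n ≤ k+1)
    (hm : ((n-1) - l) % 2 = 0) (hkpos : 0 < k) (A : Matrix (Fin n) (Fin n) ℝ)
    (hcy : hasCycle n k hkpos A) :
    ∃ M ∈ qualClass n A, 0 < (-1:ℝ)^(l*(l+1)/2) * D2 n M := by
  classical
  obtain ⟨v, hv, harc0⟩ := hcy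
  haveI : NeZero k := ⟨by omega⟩
  have hone : (⟨1 % k, Nat.mod_lt 1 hkpos⟩ : Fin k) = 1 := by
    apply Fin.ext
    rw [Fin.val_one']
  have harc : ∀ t : Fin k, A (v t) (v (t+1)) ≠ 0 := by
    intro t
    have := harc0 t
    rwa [hone] at this
  set Arc : Fin n → Fin n → Prop := fun i j => ∃ t : Fin k, v t = i ∧ v (t+1) = j with hArc
  set Ms : ℝ → Matrix (Fin n) (Fin n) ℝ := fun s =>
    Matrix.of fun i j => if Arc i j then A i j else s * A i j with hMs
  have hMsapp : ∀ s i j, Ms s i j = if Arc i j then A i j else s * A i j := fun s i j => rfl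
  -- qualitative class membership
  have hqual : ∀ s : ℝ, 0 < s → Ms s ∈ qualClass n A := by
    intro s hs i j
    rw [hMsapp]
    by_cases h : Arc i j
    · rw [if_pos h]
    · rw [if_neg h]
      rcases lt_trichotomy (A i j) 0 with hA | hA | hA
      · rw [Real.sign_of_neg hA, Real.sign_of_neg (mul_neg_of_pos_of_neg hs hA)]
      · rw [hA, mul_zero]
      · rw [Real.sign_of_pos hA, Real.sign_of_pos (mul_pos hs hA)]
  set C : Matrix (Fin n) (Fin n) ℝ := Ms 0 with hCdef
  have hC0 : ∀ i j, (¬ ∃ t : Fin k, v t = i ∧ v (t+1) = j) → C i j = 0 := by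
    intro i j h
    rw [hCdef, hMsapp, if_neg h, zero_mul]
  set c : ℝ := ∏ t : Fin k, C (v t) (v (t+1)) with hc
  have hCarc : ∀ t : Fin k, C (v t) (v (t+1)) = A (v t) (v (t+1)) := by
    intro t
    rw [hCdef, hMsapp, if_pos ⟨t, rfl, rfl⟩]
  have hcne : c ≠ 0 := by
    rw [hc]
    exact Finset.prod_ne_zero_iff.mpr fun t _ => by rw [hCarc]; exact harc t
  -- charpoly of C
  have hcp : Matrix.charpoly C
      = Polynomial.X ^ n - Polynomial.C c * Polynomial.X ^ (n - k) := by
    obtain ⟨k', rfl⟩ : ∃ k', k = k'+1 := ⟨k-1, by omega⟩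
    exact charpoly_cycle h3 hkn (by omega) v hv C hC0
  -- D2 of C
  have hD2C : D2 n C = (-1 : ℝ) ^ (l*(l+1)/2) * c ^ ((n-1) - l) := by
    unfold D2
    refine detB hkl h3 (by omega) (by omega) c _ fun i j => ?_
    rw [Matrix.of_apply, minorSum_cycle h3 hkn (by omega) c C hcp]
    have hi := i.isLt; have hj := j.isLt
    split_ifs <;> push_cast at * <;> first | rfl | omega
  -- positivity at s = 0
  have hpos0 : 0 < (-1:ℝ)^(l*(l+1)/2) * D2 n C := by
    rw [hD2C, ← mul_assoc, ← pow_add]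
    rw [Even.neg_one_pow ⟨l*(l+1)/2, by ring⟩, one_mul]
    exact Even.pow_pos (Nat.even_iff.mpr hm) hcne
  -- continuity
  have hMscont : Continuous Ms := by
    apply continuous_matrix
    intro i j
    simp only [hMs, Matrix.of_apply]
    by_cases h : Arc i j
    · simp only [if_pos h]; exact continuous_const
    · simp only [if_neg h]; exact continuous_id.mul continuous_const
  have hg : Continuous fun s => (-1:ℝ)^(l*(l+1)/2) * D2 n (Ms s) :=
    continuous_const.mul ((cont_D2 n).comp hMscont)
  have hT : Filter.Tendsto (fun s => (-1:ℝ)^(l*(l+1)/2) * D2 n (Ms s))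
      (nhdsWithin 0 (Set.Ioi 0)) (nhds ((-1:ℝ)^(l*(l+1)/2) * D2 n (Ms 0))) :=
    (hg.tendsto 0).mono_left nhdsWithin_le_nhds
  have hev : ∀ᶠ s in nhdsWithin (0:ℝ) (Set.Ioi 0),
      0 < (-1:ℝ)^(l*(l+1)/2) * D2 n (Ms s) :=
    hT.eventually (lt_mem_nhds (by rw [← hCdef]; exact hpos0))
  obtain ⟨s, hs1, hs2⟩ := (hev.and eventually_mem_nhdsWithin).exists
  exact ⟨Ms s, hqual s hs2, hs1⟩

end CycleObstructionAux

open Polynomial Matrix Finset in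
theorem cycle_obstructions
    (n : ℕ) (hn : 2 ≤ n) (A : Matrix (Fin n) (Fin n) ℝ) :
    ((n % 8 = 0 ∧ hasCycle n (n - 1) (by omega) A) → ∃ M ∈ qualClass n A, 0 < D2 n M) ∧
    ((n % 8 = 4 ∧ hasCycle n (n - 1) (by omega) A) → ∃ M ∈ qualClass n A, D2 n M < 0) ∧
    ((n % 8 = 1 ∧ hasCycle n n (by omega) A) → ∃ M ∈ qualClass n A, 0 < D2 n M) ∧
    ((n % 8 = 5 ∧ hasCycle n n (by omega) A) → ∃ M ∈ qualClass n A, D2 n M < 0) := by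
  refine ⟨?_, ?_, ?_, ?_⟩
  · rintro ⟨h8, hcy⟩
    obtain ⟨q, hq⟩ : ∃ q, n = 8*q+8 := ⟨n/8-1, by omega⟩
    obtain ⟨M, hM, hMpos⟩ := master (n := n) (k := n-1) (l := 4*q+3)
      (by omega) (by omega) (by omega) (by omega) (by omega) (by omega) A hcy
    refine ⟨M, hM, ?_⟩
    have he : (4*q+3)*((4*q+3)+1)/2 = 2*(4*(q*q)+7*q+3) := by
      rw [show (4*q+3)*((4*q+3)+1) = 2*(2*(4*(q*q)+7*q+3)) by ring]
      omega
    rwa [he, Even.neg_one_pow ⟨4*(q*q)+7*q+3, by omega⟩, one_mul] at hMpos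
  · rintro ⟨h8, hcy⟩
    obtain ⟨q, hq⟩ : ∃ q, n = 8*q+4 := ⟨n/8, by omega⟩
    obtain ⟨M, hM, hMpos⟩ := master (n := n) (k := n-1) (l := 4*q+1)
      (by omega) (by omega) (by omega) (by omega) (by omega) (by omega) A hcy
    refine ⟨M, hM, ?_⟩
    have he : (4*q+1)*((4*q+1)+1)/2 = 2*(4*(q*q)+3*q) + 1 := by
      rw [show (4*q+1)*((4*q+1)+1) = 2*(2*(4*(q*q)+3*q)+1) by ring]
      omega
    rw [he, Odd.neg_one_pow ⟨4*(q*q)+3*q, rfl⟩] at hMpos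
    linarith
  · rintro ⟨h8, hcy⟩
    obtain ⟨q, hq⟩ : ∃ q, n = 8*q+1 := ⟨n/8, by omega⟩
    obtain ⟨M, hM, hMpos⟩ := master (n := n) (k := n) (l := 4*q)
      (by omega) (by omega) (by omega) (by omega) (by omega) (by omega) A hcy
    refine ⟨M, hM, ?_⟩
    have he : (4*q)*((4*q)+1)/2 = 8*(q*q) + 2*q := by
      rw [show (4*q)*((4*q)+1) = 2*(8*(q*q)+2*q) by ring]
      omega
    rwa [he, Even.neg_one_pow ⟨4*(q*q)+q, by omega⟩, one_mul] at hMpos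
  · rintro ⟨h8, hcy⟩
    obtain ⟨q, hq⟩ : ∃ q, n = 8*q+5 := ⟨n/8, by omega⟩
    obtain ⟨M, hM, hMpos⟩ := master (n := n) (k := n) (l := 4*q+2)
      (by omega) (by omega) (by omega) (by omega) (by omega) (by omega) A hcy
    refine ⟨M, hM, ?_⟩
    have he : (4*q+2)*((4*q+2)+1)/2 = 2*(4*(q*q)+5*q+1) + 1 := by
      rw [show (4*q+2)*((4*q+2)+1) = 2*(2*(4*(q*q)+5*q+1)+1) by ring]
      omega
    rw [he, Odd.neg_one_pow ⟨4*(q*q)+5*q+1, rfl⟩] at hMpos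
    linarith
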